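/- Let k ≥ 1 be an integer and let ρ be any planar straight-line drawing of the graph G_k. Then there is a set J ⊆ {1, …, k+1} with |J| ≥ k such that for any two distinct indices i, j ∈ J, the intersection of the triangles conv{ρ(u_{i−1}), ρ(u_i), ρ(w_i)} and conv{ρ(u_{j−1}), ρ(u_j), ρ(w_j)} has 2-dimensional Lebesgue measure zero (i.e., at least k of the k+1 drawn pendant triangles are pairwise area-disjoint). -/

import Mathlib

open MeasureTheory

noncomputable section

/-- The Euclidean plane. -/
abbrev Plane : Type := EuclideanSpace ℝ (Fin 2)

/-- A planar straight-line drawing of a simple graph `G`. -/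
def IsPlanarDrawing {V : Type} (G : SimpleGraph V) (ρ : V → Plane) : Prop :=
  Function.Injective ρ ∧
  (∀ u v w : V, G.Adj u v → w ≠ u → w ≠ v → ρ w ∉ segment ℝ (ρ u) (ρ v)) ∧
  (∀ u v x y : V, G.Adj u v → G.Adj x y → s(u, v) ≠ s(x, y) →
    segment ℝ (ρ u) (ρ v) ∩ segment ℝ (ρ x) (ρ y) =
      {p : Plane | ∃ w : V, (w = u ∨ w = v) ∧ (w = x ∨ w = y) ∧ p = ρ w})

/-- Vertices of the graph `G_k`: the apex `v` (`Sum.inl ()`), the fan vertices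
`u₀, …, u_{k+1}` (`Sum.inr (Sum.inl j)` for `j : Fin (k+2)`), and the pendant vertices
`w₁, …, w_{k+1}` (`Sum.inr (Sum.inr m)` for `m : Fin (k+1)`, with `m` encoding `w_{m+1}`). -/
abbrev GkV (k : ℕ) : Type := Unit ⊕ Fin (k + 2) ⊕ Fin (k + 1)

/-- The graph `G_k`: the apex `v` is adjacent to every `u_j`; consecutive `u_j` are
adjacent; and the pendant vertex `w_{m+1}` is adjacent to `u_m` and `u_{m+1}`. -/
def Gk (k : ℕ) : SimpleGraph (GkV k) :=
  SimpleGraph.fromRel fun a b =>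
    (∃ j : Fin (k + 2), a = Sum.inl () ∧ b = Sum.inr (Sum.inl j)) ∨
    (∃ i j : Fin (k + 2), a = Sum.inr (Sum.inl i) ∧ b = Sum.inr (Sum.inl j) ∧
      (i : ℕ) + 1 = (j : ℕ)) ∨
    (∃ (m : Fin (k + 1)) (i : Fin (k + 2)), a = Sum.inr (Sum.inr m) ∧
      b = Sum.inr (Sum.inl i) ∧ ((i : ℕ) = (m : ℕ) ∨ (i : ℕ) = (m : ℕ) + 1))

/-- The drawn pendant triangle of `G_k` with index `m : Fin (k+1)` (encoding the
triangle `{u_m, u_{m+1}, w_{m+1}}`), under the drawing `ρ`. -/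
def pendantTriangle {k : ℕ} (ρ : GkV k → Plane) (m : Fin (k + 1)) : Set Plane :=
  convexHull ℝ {ρ (Sum.inr (Sum.inl m.castSucc)), ρ (Sum.inr (Sum.inl m.succ)),
    ρ (Sum.inr (Sum.inr m))}

namespace GkAux

open Set

variable {k : ℕ}

/-- The apex vertex. -/
def vA : GkV k := Sum.inl ()
/-- Fan vertices. -/
def vU (l : Fin (k + 2)) : GkV k := Sum.inr (Sum.inl l)
/-- Pendant vertices. -/
def vW (m : Fin (k + 1)) : GkV k := Sum.inr (Sum.inr m)

lemma adj_AU (l : Fin (k + 2)) : (Gk k).Adj vA (vU l) := by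
  rw [Gk, SimpleGraph.fromRel_adj]
  exact ⟨by simp [vA, vU], Or.inl (Or.inl ⟨l, rfl, rfl⟩)⟩

lemma adj_UU (m : Fin (k + 1)) : (Gk k).Adj (vU m.castSucc) (vU m.succ) := by
  rw [Gk, SimpleGraph.fromRel_adj]
  refine ⟨by simp [vU, Fin.ext_iff]; try omega, Or.inl (Or.inr (Or.inl ⟨m.castSucc, m.succ, rfl, rfl, by simp⟩))⟩

lemma adj_WU (m : Fin (k + 1)) {l : Fin (k + 2)} (h : (l : ℕ) = m ∨ (l : ℕ) = (m : ℕ) + 1) :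
    (Gk k).Adj (vW m) (vU l) := by
  rw [Gk, SimpleGraph.fromRel_adj]
  exact ⟨by simp [vW, vU], Or.inl (Or.inr (Or.inr ⟨m, l, rfl, rfl, h⟩))⟩

lemma adj_WUc (m : Fin (k + 1)) : (Gk k).Adj (vW m) (vU m.castSucc) :=
  adj_WU m (Or.inl (Fin.coe_castSucc m))

lemma adj_WUs (m : Fin (k + 1)) : (Gk k).Adj (vW m) (vU m.succ) :=
  adj_WU m (Or.inr (Fin.val_succ m))

lemma sym2_ne {α : Type*} {a b x y : α}
    (h : ¬((a = x ∧ b = y) ∨ (a = y ∧ b = x))) : s(a, b) ≠ s(x, y) :=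
  fun he => h (Sym2.eq_iff.mp he)

variable {ρ : GkV k → Plane}

lemma seg_help (hρ : IsPlanarDrawing (Gk k) ρ) {a b x y : GkV k}
    (hab : (Gk k).Adj a b) (hxy : (Gk k).Adj x y) (hne : s(a, b) ≠ s(x, y)) {p : Plane}
    (h1 : p ∈ segment ℝ (ρ a) (ρ b)) (h2 : p ∈ segment ℝ (ρ x) (ρ y)) :
    p = ρ a ∨ p = ρ b := by
  have hset := hρ.2.2 a b x y hab hxy hne
  have hp : p ∈ {p : Plane | ∃ w : GkV k, (w = a ∨ w = b) ∧ (w = x ∨ w = y) ∧ p = ρ w} := by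
    rw [← hset]; exact ⟨h1, h2⟩
  obtain ⟨w, hw1, -, rfl⟩ := hp
  rcases hw1 with rfl | rfl
  · exact Or.inl rfl
  · exact Or.inr rfl

lemma tri_indep (hρ : IsPlanarDrawing (Gk k) ρ) (m : Fin (k + 1)) :
    AffineIndependent ℝ ![ρ (vU m.castSucc), ρ (vU m.succ), ρ (vW m)] := by
  rw [affineIndependent_iff_not_collinear_set]
  intro hcol
  rcases hcol.wbtw_or_wbtw_or_wbtw with h | h | h
  · exact hρ.2.1 _ _ (vU m.succ) ((adj_WUc m).symm)
      (by simp [vU, Fin.ext_iff]; try omega) (by simp [vU, vW]) h.mem_segment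
  · exact hρ.2.1 _ _ (vW m) ((adj_UU m).symm) (by simp [vU, vW]) (by simp [vU, vW])
      h.mem_segment
  · exact hρ.2.1 _ _ (vU m.castSucc) (adj_WUs m) (by simp [vU, vW])
      (by simp [vU, Fin.ext_iff]; try omega) h.mem_segment

/-- The affine basis given by the three corners of the `m`-th pendant triangle. -/
noncomputable def triBasis (hρ : IsPlanarDrawing (Gk k) ρ) (m : Fin (k + 1)) :
    AffineBasis (Fin 3) ℝ Plane :=
  ⟨![ρ (vU m.castSucc), ρ (vU m.succ), ρ (vW m)], tri_indep hρ m, by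
    rw [(tri_indep hρ m).affineSpan_eq_top_iff_card_eq_finrank_add_one]
    simp [finrank_euclideanSpace_fin]⟩

lemma triBasis_coe (hρ : IsPlanarDrawing (Gk k) ρ) (m : Fin (k + 1)) :
    ⇑(triBasis hρ m) = ![ρ (vU m.castSucc), ρ (vU m.succ), ρ (vW m)] := rfl

lemma triBasis_range (hρ : IsPlanarDrawing (Gk k) ρ) (m : Fin (k + 1)) :
    Set.range (triBasis hρ m) = {ρ (vU m.castSucc), ρ (vU m.succ), ρ (vW m)} := by
  rw [triBasis_coe]
  ext x
  constructor
  · rintro ⟨i, rfl⟩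
    fin_cases i <;> simp
  · rintro (rfl | rfl | rfl)
    exacts [⟨0, rfl⟩, ⟨1, rfl⟩, ⟨2, rfl⟩]

lemma T_def (m : Fin (k + 1)) :
    pendantTriangle ρ m = convexHull ℝ {ρ (vU m.castSucc), ρ (vU m.succ), ρ (vW m)} := rfl

lemma T_eq (hρ : IsPlanarDrawing (Gk k) ρ) (m : Fin (k + 1)) :
    pendantTriangle ρ m = {x | ∀ i, 0 ≤ (triBasis hρ m).coord i x} := by
  rw [T_def, ← triBasis_range hρ m, AffineBasis.convexHull_eq_nonneg_coord]

lemma int_T_eq (hρ : IsPlanarDrawing (Gk k) ρ) (m : Fin (k + 1)) :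
    interior (pendantTriangle ρ m) = {x | ∀ i, 0 < (triBasis hρ m).coord i x} := by
  rw [T_def, ← triBasis_range hρ m, AffineBasis.interior_convexHull]

lemma T_closed (m : Fin (k + 1)) : IsClosed (pendantTriangle ρ m) :=
  ((Set.toFinite _).isCompact_convexHull ℝ).isClosed

lemma T_convex (m : Fin (k + 1)) : Convex ℝ (pendantTriangle ρ m) :=
  convex_convexHull ℝ _

lemma vertex_mem_c (m : Fin (k + 1)) : ρ (vU m.castSucc) ∈ pendantTriangle ρ m :=
  subset_convexHull ℝ _ (by simp [vU, vW])

lemma vertex_mem_s (m : Fin (k + 1)) : ρ (vU m.succ) ∈ pendantTriangle ρ m :=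
  subset_convexHull ℝ _ (by simp [vU, vW])

lemma vertex_mem_w (m : Fin (k + 1)) : ρ (vW m) ∈ pendantTriangle ρ m :=
  subset_convexHull ℝ _ (by simp [vU, vW])

lemma frontier_sub (hρ : IsPlanarDrawing (Gk k) ρ) (m : Fin (k + 1)) {x : Plane}
    (hx : x ∈ frontier (pendantTriangle ρ m)) :
    x ∈ segment ℝ (ρ (vU m.castSucc)) (ρ (vU m.succ)) ∨
    x ∈ segment ℝ (ρ (vU m.castSucc)) (ρ (vW m)) ∨
    x ∈ segment ℝ (ρ (vU m.succ)) (ρ (vW m)) := by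
  rw [(T_closed m).frontier_eq] at hx
  obtain ⟨hxT, hxi⟩ := hx
  have hnn : ∀ i, 0 ≤ (triBasis hρ m).coord i x := by rwa [T_eq hρ m] at hxT
  have hzero : ∃ i, (triBasis hρ m).coord i x = 0 := by
    by_contra hc
    push_neg at hc
    exact hxi (by rw [int_T_eq hρ m]; exact fun i => lt_of_le_of_ne (hnn i) (Ne.symm (hc i)))
  have hsum : ∑ i, (triBasis hρ m).coord i x = 1 := (triBasis hρ m).sum_coord_apply_eq_one x
  have hcomb : ∑ i, (triBasis hρ m).coord i x • (triBasis hρ m) i = x := by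
    have h := (triBasis hρ m).affineCombination_coord_eq_self x
    rwa [Finset.affineCombination_eq_linear_combination _ _ _ hsum] at h
  rw [Fin.sum_univ_three] at hsum hcomb
  set c0 := (triBasis hρ m).coord 0 x
  set c1 := (triBasis hρ m).coord 1 x
  set c2 := (triBasis hρ m).coord 2 x
  have hb0 : (triBasis hρ m) 0 = ρ (vU m.castSucc) := rfl
  have hb1 : (triBasis hρ m) 1 = ρ (vU m.succ) := rfl
  have hb2 : (triBasis hρ m) 2 = ρ (vW m) := rfl
  rw [hb0, hb1, hb2] at hcomb
  obtain ⟨i, hi⟩ := hzero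
  fin_cases i
  · right; right
    refine ⟨c1, c2, hnn 1, hnn 2, by rw [show c0 = 0 from hi] at hsum; linarith, ?_⟩
    rw [show c0 = 0 from hi, zero_smul, zero_add] at hcomb
    exact hcomb
  · right; left
    refine ⟨c0, c2, hnn 0, hnn 2, by rw [show c1 = 0 from hi] at hsum; linarith, ?_⟩
    rw [show c1 = 0 from hi, zero_smul, add_zero] at hcomb
    exact hcomb
  · left
    refine ⟨c0, c1, hnn 0, hnn 1, by rw [show c2 = 0 from hi] at hsum; linarith, ?_⟩
    rw [show c2 = 0 from hi, zero_smul, add_zero] at hcomb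
    exact hcomb

lemma mem_int_of_ne (hρ : IsPlanarDrawing (Gk k) ρ) (m : Fin (k + 1)) {z : GkV k}
    (h0 : z ≠ vU m.castSucc) (h1 : z ≠ vU m.succ) (h2 : z ≠ vW m)
    (hz : ρ z ∈ pendantTriangle ρ m) : ρ z ∈ interior (pendantTriangle ρ m) := by
  by_contra h
  have hf : ρ z ∈ frontier (pendantTriangle ρ m) := by
    rw [(T_closed m).frontier_eq]; exact ⟨hz, h⟩
  rcases frontier_sub hρ m hf with hseg | hseg | hseg
  · exact hρ.2.1 _ _ z (adj_UU m) h0 h1 hseg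
  · exact hρ.2.1 _ _ z ((adj_WUc m).symm) h0 h2 hseg
  · exact hρ.2.1 _ _ z ((adj_WUs m).symm) h1 h2 hseg

lemma cross {T : Set Plane} (hcl : IsClosed T) {x y : Plane}
    (hx : x ∈ interior T) (hy : y ∉ T) :
    ∃ z ∈ segment ℝ x y, z ∈ frontier T ∧ z ≠ x ∧ z ≠ y := by
  by_cases hne : (segment ℝ x y ∩ frontier T).Nonempty
  · obtain ⟨z, hz1, hz2⟩ := hne
    have h2 := hz2
    rw [hcl.frontier_eq] at h2
    refine ⟨z, hz1, hz2, ?_, ?_⟩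
    · rintro rfl; exact h2.2 hx
    · rintro rfl; exact hy h2.1
  · exfalso
    have hsub : segment ℝ x y ⊆ interior T ∪ Tᶜ := by
      intro p hp
      by_cases hpT : p ∈ T
      · left
        by_contra hpi
        exact hne ⟨p, hp, by rw [hcl.frontier_eq]; exact ⟨hpT, hpi⟩⟩
      · right; exact hpT
    have hdisj : Disjoint (interior T) Tᶜ :=
      Set.disjoint_left.mpr fun p hp hpc => hpc (interior_subset hp)
    rcases (convex_segment x y).isPreconnected.subset_or_subset isOpen_interior
        hcl.isOpen_compl hdisj hsub with h | h
    · exact hy (interior_subset (h (right_mem_segment ℝ x y)))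
    · exact h (left_mem_segment ℝ x y) (interior_subset hx)

lemma seg_antisymm {p q z : Plane} (hz : z ∈ segment ℝ p q) (hp : p ∈ segment ℝ z q) :
    p = z := by
  rw [mem_segment_iff_wbtw] at hz hp
  exact (wbtw_swap_left_iff ℝ q).mp ⟨hz, hp⟩

lemma push (hρ : IsPlanarDrawing (Gk k) ρ) (m : Fin (k + 1)) {a b : GkV k}
    (hab : (Gk k).Adj a b)
    (h1 : s(a, b) ≠ s(vU m.castSucc, vU m.succ))
    (h2 : s(a, b) ≠ s(vU m.castSucc, vW m))
    (h3 : s(a, b) ≠ s(vU m.succ, vW m))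
    {z : Plane} (hz : z ∈ segment ℝ (ρ a) (ρ b)) (hzi : z ∈ interior (pendantTriangle ρ m)) :
    ρ b ∈ pendantTriangle ρ m := by
  by_contra hb
  obtain ⟨y, hyseg, hyf, hyz, hyb⟩ := cross (T_closed m) hzi hb
  have hysub : y ∈ segment ℝ (ρ a) (ρ b) :=
    (convex_segment _ _).segment_subset hz (right_mem_segment ℝ _ _) hyseg
  have hya : y = ρ a ∨ y = ρ b := by
    rcases frontier_sub hρ m hyf with h | h | h
    exacts [seg_help hρ hab (adj_UU m) h1 hysub h,
      seg_help hρ hab ((adj_WUc m).symm) h2 hysub h,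
      seg_help hρ hab ((adj_WUs m).symm) h3 hysub h]
  rcases hya with rfl | rfl
  · exact hyz (seg_antisymm hz hyseg)
  · exact hyb rfl


section Main

variable {k : ℕ} {ρ : GkV k → Plane}

/-- Convenient Sym2-inequality discharger facts packaged as a tactic-friendly lemma set. -/

lemma vne_nat {i j : Fin (k + 1)} (hij : i ≠ j) : (i : ℕ) ≠ (j : ℕ) :=
  fun h => hij (Fin.ext h)

/-- If the interiors of two distinct pendant triangles meet, one triangle contains the other. -/
lemma dich (hρ : IsPlanarDrawing (Gk k) ρ) {i j : Fin (k + 1)} (hij : i ≠ j)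
    (hne : (interior (pendantTriangle ρ i) ∩ interior (pendantTriangle ρ j)).Nonempty) :
    pendantTriangle ρ i ⊆ pendantTriangle ρ j ∨ pendantTriangle ρ j ⊆ pendantTriangle ρ i := by
  have hijn : (i : ℕ) ≠ (j : ℕ) := vne_nat hij
  by_cases hsub : pendantTriangle ρ i ⊆ pendantTriangle ρ j
  · exact Or.inl hsub
  right
  obtain ⟨a, haTi, haTj⟩ := Set.not_subset.mp hsub
  obtain ⟨c, hci, hcj⟩ := hne
  obtain ⟨z, hzseg, hzf, hzc, hza⟩ := cross (T_closed j) hcj haTj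
  have hzi : z ∈ interior (pendantTriangle ρ i) := by
    have hzo : z ∈ openSegment ℝ c a :=
      mem_openSegment_of_ne_left_right (Ne.symm hzc) (Ne.symm hza) hzseg
    exact (T_convex i).openSegment_interior_self_subset_interior hci haTi hzo
  -- z lies on one of the three edges of triangle j
  have key : ρ (vU j.castSucc) ∈ pendantTriangle ρ i ∧ ρ (vU j.succ) ∈ pendantTriangle ρ i ∧
      ρ (vW j) ∈ pendantTriangle ρ i := by
    rcases frontier_sub hρ j hzf with h | h | h
    · -- edge (u_j, u_{j+1})
      have hb : ρ (vU j.succ) ∈ pendantTriangle ρ i :=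
        push hρ i (adj_UU j)
          (sym2_ne (by simp [vU, Fin.ext_iff]; omega))
          (sym2_ne (by simp [vU, vW, Fin.ext_iff]; try omega))
          (sym2_ne (by simp [vU, vW, Fin.ext_iff]; try omega)) h hzi
      have ha' : ρ (vU j.castSucc) ∈ pendantTriangle ρ i :=
        push hρ i (adj_UU j).symm
          (sym2_ne (by simp [vU, Fin.ext_iff]; omega))
          (sym2_ne (by simp [vU, vW, Fin.ext_iff]; try omega))
          (sym2_ne (by simp [vU, vW, Fin.ext_iff]; try omega))
          (by rw [segment_symm]; exact h) hzi
      refine ⟨ha', hb, ?_⟩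
      by_cases hA : (j : ℕ) = (i : ℕ) + 1
      · -- use u_{j+1} which is interior to T_i
        have hint : ρ (vU j.succ) ∈ interior (pendantTriangle ρ i) :=
          mem_int_of_ne hρ i (by simp [vU, Fin.ext_iff]; omega)
            (by simp [vU, Fin.ext_iff]; omega) (by simp [vU, vW]) hb
        exact push hρ i (adj_WUs j).symm
          (sym2_ne (by simp [vU, vW, Fin.ext_iff]; try omega))
          (sym2_ne (by simp [vU, vW, Fin.ext_iff]; try omega))
          (sym2_ne (by simp [vU, vW, Fin.ext_iff]; try omega))
          (left_mem_segment ℝ _ _) hint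
      · have hint : ρ (vU j.castSucc) ∈ interior (pendantTriangle ρ i) :=
          mem_int_of_ne hρ i (by simp [vU, Fin.ext_iff]; omega)
            (by simp [vU, Fin.ext_iff]; omega) (by simp [vU, vW]) ha'
        exact push hρ i (adj_WUc j).symm
          (sym2_ne (by simp [vU, vW, Fin.ext_iff]; try omega))
          (sym2_ne (by simp [vU, vW, Fin.ext_iff]; try omega))
          (sym2_ne (by simp [vU, vW, Fin.ext_iff]; try omega))
          (left_mem_segment ℝ _ _) hint
    · -- edge (u_j, w_j)
      have hw : ρ (vW j) ∈ pendantTriangle ρ i :=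
        push hρ i (adj_WUc j).symm
          (sym2_ne (by simp [vU, vW, Fin.ext_iff]; try omega))
          (sym2_ne (by simp [vU, vW, Fin.ext_iff]; try omega))
          (sym2_ne (by simp [vU, vW, Fin.ext_iff]; try omega)) h hzi
      have hu : ρ (vU j.castSucc) ∈ pendantTriangle ρ i :=
        push hρ i (adj_WUc j)
          (sym2_ne (by simp [vU, vW, Fin.ext_iff]; try omega))
          (sym2_ne (by simp [vU, vW, Fin.ext_iff]; try omega))
          (sym2_ne (by simp [vU, vW, Fin.ext_iff]; try omega))
          (by rw [segment_symm]; exact h) hzi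
      have hwint : ρ (vW j) ∈ interior (pendantTriangle ρ i) :=
        mem_int_of_ne hρ i (by simp [vU, vW]) (by simp [vU, vW])
          (by simp [vW, Fin.ext_iff]; omega) hw
      have hu2 : ρ (vU j.succ) ∈ pendantTriangle ρ i :=
        push hρ i (adj_WUs j)
          (sym2_ne (by simp [vU, vW, Fin.ext_iff]; try omega))
          (sym2_ne (by simp [vU, vW, Fin.ext_iff]; try omega))
          (sym2_ne (by simp [vU, vW, Fin.ext_iff]; try omega))
          (left_mem_segment ℝ _ _) hwint
      exact ⟨hu, hu2, hw⟩
    · -- edge (u_{j+1}, w_j)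
      have hw : ρ (vW j) ∈ pendantTriangle ρ i :=
        push hρ i (adj_WUs j).symm
          (sym2_ne (by simp [vU, vW, Fin.ext_iff]; try omega))
          (sym2_ne (by simp [vU, vW, Fin.ext_iff]; try omega))
          (sym2_ne (by simp [vU, vW, Fin.ext_iff]; try omega)) h hzi
      have hu : ρ (vU j.succ) ∈ pendantTriangle ρ i :=
        push hρ i (adj_WUs j)
          (sym2_ne (by simp [vU, vW, Fin.ext_iff]; try omega))
          (sym2_ne (by simp [vU, vW, Fin.ext_iff]; try omega))
          (sym2_ne (by simp [vU, vW, Fin.ext_iff]; try omega))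
          (by rw [segment_symm]; exact h) hzi
      have hwint : ρ (vW j) ∈ interior (pendantTriangle ρ i) :=
        mem_int_of_ne hρ i (by simp [vU, vW]) (by simp [vU, vW])
          (by simp [vW, Fin.ext_iff]; omega) hw
      have hu2 : ρ (vU j.castSucc) ∈ pendantTriangle ρ i :=
        push hρ i (adj_WUc j)
          (sym2_ne (by simp [vU, vW, Fin.ext_iff]; try omega))
          (sym2_ne (by simp [vU, vW, Fin.ext_iff]; try omega))
          (sym2_ne (by simp [vU, vW, Fin.ext_iff]; try omega))
          (left_mem_segment ℝ _ _) hwint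
      exact ⟨hu2, hu, hw⟩
  rw [T_def ]
  refine convexHull_min ?_ (T_convex i)
  rintro p (rfl | rfl | rfl)
  exacts [key.1, key.2.1, key.2.2]

/-- If triangle `j` is contained in triangle `i` (with `i ≠ j`), the apex lies inside `T_i`. -/
lemma outer_bad (hρ : IsPlanarDrawing (Gk k) ρ) {i j : Fin (k + 1)} (hij : i ≠ j)
    (hsub : pendantTriangle ρ j ⊆ pendantTriangle ρ i) :
    ρ (vA) ∈ interior (pendantTriangle ρ i) := by
  have hijn : (i : ℕ) ≠ (j : ℕ) := vne_nat hij
  have hA : ρ (vA) ∈ pendantTriangle ρ i := by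
    by_cases hc : (j : ℕ) = (i : ℕ) + 1
    · have hm : ρ (vU j.succ) ∈ pendantTriangle ρ i := hsub (vertex_mem_s j)
      have hint : ρ (vU j.succ) ∈ interior (pendantTriangle ρ i) :=
        mem_int_of_ne hρ i (by simp [vU, Fin.ext_iff]; omega)
          (by simp [vU, Fin.ext_iff]; omega) (by simp [vU, vW]) hm
      exact push hρ i (adj_AU j.succ).symm
        (sym2_ne (by simp [vA, vU])) (sym2_ne (by simp [vA, vU, vW]))
        (sym2_ne (by simp [vA, vU, vW])) (left_mem_segment ℝ _ _) hint
    · have hm : ρ (vU j.castSucc) ∈ pendantTriangle ρ i := hsub (vertex_mem_c j)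
      have hint : ρ (vU j.castSucc) ∈ interior (pendantTriangle ρ i) :=
        mem_int_of_ne hρ i (by simp [vU, Fin.ext_iff]; omega)
          (by simp [vU, Fin.ext_iff]; omega) (by simp [vU, vW]) hm
      exact push hρ i (adj_AU j.castSucc).symm
        (sym2_ne (by simp [vA, vU])) (sym2_ne (by simp [vA, vU, vW]))
        (sym2_ne (by simp [vA, vU, vW])) (left_mem_segment ℝ _ _) hint
  exact mem_int_of_ne hρ i (by simp [vA, vU]) (by simp [vA, vU]) (by simp [vA, vW]) hA

lemma all_u_mem (hρ : IsPlanarDrawing (Gk k) ρ) {j : Fin (k + 1)}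
    (hbad : ρ (vA) ∈ interior (pendantTriangle ρ j)) (l : Fin (k + 2)) :
    ρ (vU l) ∈ pendantTriangle ρ j := by
  by_cases h0 : (l : ℕ) = (j : ℕ)
  · have : l = j.castSucc := Fin.ext (by simpa using h0)
    rw [this]; exact vertex_mem_c j
  by_cases h1 : (l : ℕ) = (j : ℕ) + 1
  · have : l = j.succ := Fin.ext (by simpa using h1)
    rw [this]; exact vertex_mem_s j
  · exact push hρ j (adj_AU l)
      (sym2_ne (by simp [vA, vU])) (sym2_ne (by simp [vA, vU, vW]))
      (sym2_ne (by simp [vA, vU, vW])) (left_mem_segment ℝ _ _) hbad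

/-- If the apex is inside triangle `j`, every other triangle is contained in `T_j`. -/
lemma swallow (hρ : IsPlanarDrawing (Gk k) ρ) {i j : Fin (k + 1)} (hij : i ≠ j)
    (hbad : ρ (vA) ∈ interior (pendantTriangle ρ j)) :
    pendantTriangle ρ i ⊆ pendantTriangle ρ j := by
  have hijn : (i : ℕ) ≠ (j : ℕ) := vne_nat hij
  have hu1 : ρ (vU i.castSucc) ∈ pendantTriangle ρ j := all_u_mem hρ hbad _
  have hu2 : ρ (vU i.succ) ∈ pendantTriangle ρ j := all_u_mem hρ hbad _
  have hw : ρ (vW i) ∈ pendantTriangle ρ j := by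
    by_cases hc : (i : ℕ) = (j : ℕ) + 1
    · have hint : ρ (vU i.succ) ∈ interior (pendantTriangle ρ j) :=
        mem_int_of_ne hρ j (by simp [vU, Fin.ext_iff]; omega)
          (by simp [vU, Fin.ext_iff]; omega) (by simp [vU, vW]) hu2
      exact push hρ j (adj_WUs i).symm
        (sym2_ne (by simp [vU, vW, Fin.ext_iff]; try omega))
        (sym2_ne (by simp [vU, vW, Fin.ext_iff]; try omega))
        (sym2_ne (by simp [vU, vW, Fin.ext_iff]; try omega))
        (left_mem_segment ℝ _ _) hint
    · have hint : ρ (vU i.castSucc) ∈ interior (pendantTriangle ρ j) :=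
        mem_int_of_ne hρ j (by simp [vU, Fin.ext_iff]; omega)
          (by simp [vU, Fin.ext_iff]; omega) (by simp [vU, vW]) hu1
      exact push hρ j (adj_WUc i).symm
        (sym2_ne (by simp [vU, vW, Fin.ext_iff]; try omega))
        (sym2_ne (by simp [vU, vW, Fin.ext_iff]; try omega))
        (sym2_ne (by simp [vU, vW, Fin.ext_iff]; try omega))
        (left_mem_segment ℝ _ _) hint
  rw [T_def]
  refine convexHull_min ?_ (T_convex j)
  rintro p (rfl | rfl | rfl)
  exacts [hu1, hu2, hw]

lemma unique_bad (hρ : IsPlanarDrawing (Gk k) ρ) {i j : Fin (k + 1)} (hij : i ≠ j)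
    (hbi : ρ (vA) ∈ interior (pendantTriangle ρ i))
    (hbj : ρ (vA) ∈ interior (pendantTriangle ρ j)) : False := by
  have hijn : (i : ℕ) ≠ (j : ℕ) := vne_nat hij
  have h1 : pendantTriangle ρ i ⊆ pendantTriangle ρ j := swallow hρ hij hbj
  have h2 : pendantTriangle ρ j ⊆ pendantTriangle ρ i := swallow hρ hij.symm hbi
  have heq : pendantTriangle ρ i = pendantTriangle ρ j := subset_antisymm h1 h2
  have hwj : ρ (vW j) ∈ pendantTriangle ρ i := heq ▸ vertex_mem_w j
  have hint : ρ (vW j) ∈ interior (pendantTriangle ρ i) :=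
    mem_int_of_ne hρ i (by simp [vU, vW]) (by simp [vU, vW])
      (by simp [vW, Fin.ext_iff]; omega) hwj
  rw [heq, int_T_eq hρ j] at hint
  have h0 := hint 0
  have hb2 : (triBasis hρ j) 2 = ρ (vW j) := rfl
  have hzero : (triBasis hρ j).coord 0 (ρ (vW j)) = 0 := by
    rw [← hb2]
    exact (triBasis hρ j).coord_apply_ne (by decide : (0 : Fin 3) ≠ 2)
  rw [hzero] at h0
  exact lt_irrefl 0 h0

lemma overlap (hρ : IsPlanarDrawing (Gk k) ρ) {i j : Fin (k + 1)} (hij : i ≠ j)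
    (hvol : volume (pendantTriangle ρ i ∩ pendantTriangle ρ j) ≠ 0) :
    ρ (vA) ∈ interior (pendantTriangle ρ i) ∨ ρ (vA) ∈ interior (pendantTriangle ρ j) := by
  have hne : (interior (pendantTriangle ρ i) ∩ interior (pendantTriangle ρ j)).Nonempty := by
    by_contra hempty
    apply hvol
    have hconv : Convex ℝ (pendantTriangle ρ i ∩ pendantTriangle ρ j) :=
      (T_convex i).inter (T_convex j)
    have hint : interior (pendantTriangle ρ i ∩ pendantTriangle ρ j) = ∅ := by
      rw [interior_inter]
      exact Set.not_nonempty_iff_eq_empty.mp hempty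
    have hspan : affineSpan ℝ (pendantTriangle ρ i ∩ pendantTriangle ρ j) ≠ ⊤ := by
      intro htop
      have hnon : (interior (convexHull ℝ (pendantTriangle ρ i ∩ pendantTriangle ρ j))).Nonempty :=
        interior_convexHull_nonempty_iff_affineSpan_eq_top.mpr htop
      rw [hconv.convexHull_eq, hint] at hnon
      exact Set.not_nonempty_empty hnon
    have hnull := MeasureTheory.Measure.addHaar_affineSubspace (volume : Measure Plane) _ hspan
    exact measure_mono_null (subset_affineSpan ℝ _) hnull
  rcases dich hρ hij hne with h | h
  · exact Or.inr (outer_bad hρ hij.symm h)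
  · exact Or.inl (outer_bad hρ hij h)

end Main

end GkAux

/-- In any planar straight-line drawing of `G_k`, at least `k` of the `k+1`
drawn pendant triangles are pairwise area-disjoint. -/
theorem Gk_pendant_triangles_areaDisjoint (k : ℕ) (hk : 1 ≤ k)
    (ρ : GkV k → Plane) (hρ : IsPlanarDrawing (Gk k) ρ) :
    ∃ J : Finset (Fin (k + 1)), k ≤ J.card ∧
      ∀ i ∈ J, ∀ j ∈ J, i ≠ j →
        volume (pendantTriangle ρ i ∩ pendantTriangle ρ j) = 0 := by
  classical
  by_cases hex : ∃ m : Fin (k + 1), ρ (Sum.inl ()) ∈ interior (pendantTriangle ρ m)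
  · obtain ⟨m0, hm0⟩ := hex
    refine ⟨Finset.univ.erase m0, ?_, ?_⟩
    · rw [Finset.card_erase_of_mem (Finset.mem_univ _), Finset.card_univ, Fintype.card_fin]; omega
    · intro i hi j hj hij
      by_contra hvol
      rcases GkAux.overlap hρ hij hvol with h | h
      · exact GkAux.unique_bad hρ (Finset.ne_of_mem_erase hi) h hm0
      · exact GkAux.unique_bad hρ (Finset.ne_of_mem_erase hj) h hm0
  · refine ⟨Finset.univ, ?_, ?_⟩
    · rw [Finset.card_univ, Fintype.card_fin]; omega
    · intro i hi j hj hij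
      by_contra hvol
      rcases GkAux.overlap hρ hij hvol with h | h
      · exact hex ⟨i, h⟩
      · exact hex ⟨j, h⟩
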